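/- Let p ≥ 2 and fix t with 0 < t < 2/(p-1). There exist a natural number m₀ ≥ 1 and, for each integer m ≥ m₀, a constant C > 0 depending only on p, t, m (in particular independent of Ω, f and u) with the following property: for every integer n ≥ 1, every open set Ω ⊆ ℝⁿ, every continuous f : Ω → ℝ with f ≥ 0, and every u ∈ C¹(Ω) which is a weak solution of -Δ_p u = f(x) e^u on Ω and is stable on Ω, one has, for every C¹ function φ : ℝⁿ → ℝ with compact support in Ω and 0 ≤ φ ≤ 1: ∫_Ω f e^{(2t+1)u} φ^{2m} dx ≤ C ∫_Ω f^{-2t} (|∇u|^{p-2} |∇φ|²)^{2t+1} dx, where both sides are Lebesgue integrals with values in [0,∞] (the right-hand side may be +∞ where f vanishes). -/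

import Mathlib

open Real MeasureTheory InnerProductSpace

set_option linter.unusedSectionVars false
set_option maxHeartbeats 2000000

section Aux

variable {F : Type*} [NormedAddCommGroup F] [InnerProductSpace ℝ F] [CompleteSpace F]

theorem myGradAux {Ω : Set F} (hΩ : IsOpen Ω) {u ph : F → ℝ} (hu : ContDiffOn ℝ 1 u Ω)
    (hφ : ContDiff ℝ 1 ph) (s : ℝ) (k : ℕ) {x : F} (hx : x ∈ Ω) :
    HasGradientAt (fun y => Real.exp (s * u y) * ph y ^ k)
      ((Real.exp (s * u x) * (s * ph x ^ k)) • gradient u x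
        + (Real.exp (s * u x) * (k * ph x ^ (k - 1))) • gradient ph x) x := by
  have hux : DifferentiableAt ℝ u x := (hu.contDiffAt (hΩ.mem_nhds hx)).differentiableAt one_ne_zero
  have hφx : DifferentiableAt ℝ ph x := (hφ.differentiable one_ne_zero).differentiableAt
  have h1 : HasFDerivAt (fun y => Real.exp (s * u y))
      (Real.exp (s * u x) • (s • fderiv ℝ u x)) x :=
    (hux.hasFDerivAt.const_mul s).exp
  have h2 : HasFDerivAt (fun y => ph y ^ k)
      (((k : ℝ) * ph x ^ (k - 1)) • fderiv ℝ ph x) x := by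
    exact (hasDerivAt_pow k (ph x)).comp_hasFDerivAt x hφx.hasFDerivAt
  have h3 := h1.mul h2
  rw [hasGradientAt_iff_hasFDerivAt]
  convert h3 using 1
  · rfl
  · rfl
  rw [map_add]
  unfold gradient
  rw [_root_.map_smul, _root_.map_smul, LinearIsometryEquiv.apply_symm_apply,
    LinearIsometryEquiv.apply_symm_apply]
  ext y
  simp
  ring

theorem mySuppAux {u ph : F → ℝ} (s : ℝ) {k : ℕ} (hk : 1 ≤ k) :
    Function.support (fun y => Real.exp (s * u y) * ph y ^ k) ⊆ tsupport ph := by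
  intro y hy
  by_contra hns
  have h0 : ph y = 0 := image_eq_zero_of_notMem_tsupport hns
  simp [Function.mem_support, h0, zero_pow (by omega : k ≠ 0)] at hy

theorem myContDiffAux {Ω : Set F} (hΩ : IsOpen Ω) {u ph : F → ℝ} (hu : ContDiffOn ℝ 1 u Ω)
    (hφ : ContDiff ℝ 1 ph) (hsupp : tsupport ph ⊆ Ω) (s : ℝ) {k : ℕ} (hk : 1 ≤ k) :
    ContDiff ℝ 1 (fun y => Real.exp (s * u y) * ph y ^ k) := by
  rw [contDiff_iff_contDiffAt]
  intro x
  by_cases hx : x ∈ Ω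
  · have h1 : ContDiffAt ℝ 1 u x := hu.contDiffAt (hΩ.mem_nhds hx)
    exact ((Real.contDiff_exp.contDiffAt).comp x ((contDiffAt_const).mul h1)).mul
      ((hφ.contDiffAt).pow k)
  · have hxt : x ∉ tsupport ph := fun h => hx (hsupp h)
    have hev : ∀ᶠ y in nhds x, ph y = 0 :=
      (isClosed_tsupport ph).isOpen_compl.eventually_mem hxt |>.mono
        (fun y hy => image_eq_zero_of_notMem_tsupport hy)
    have : (fun y => Real.exp (s * u y) * ph y ^ k) =ᶠ[nhds x] (fun _ => 0) := by
      filter_upwards [hev] with y hy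
      simp [hy, zero_pow (by omega : k ≠ 0)]
    exact (contDiffAt_const (c := (0:ℝ))).congr_of_eventuallyEq this

theorem myGradSupp {ph : F → ℝ} : Function.support (fun x => gradient ph x) ⊆ tsupport ph := by
  intro x hx
  by_contra hns
  apply hx
  show gradient ph x = 0
  unfold gradient
  have : fderiv ℝ ph x = 0 := by
    by_contra h
    exact hns (support_fderiv_subset (𝕜 := ℝ) (f := ph) h)
  simp [this]

theorem myIntegrableAux {n : ℕ} {Ω K : Set (EuclideanSpace ℝ (Fin n))}
    (hΩ : IsOpen Ω) (hK : IsCompact K) (hKΩ : K ⊆ Ω)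
    {G : EuclideanSpace ℝ (Fin n) → ℝ} (hG : ContinuousOn G Ω)
    (hsupp : Function.support G ⊆ K) : IntegrableOn G Ω := by
  have h1 : IntegrableOn G K := (hG.mono hKΩ).integrableOn_compact hK
  have h2 : IntegrableOn G (Ω \ K) := by
    apply IntegrableOn.congr_fun (integrableOn_zero)
      ?_ (hΩ.measurableSet.diff hK.measurableSet)
    intro x hx
    exact (Function.notMem_support.1 (fun hs => hx.2 (hsupp hs))).symm
  exact (h1.union h2).mono_set (fun x hx => by
    by_cases h : x ∈ K
    · exact Or.inl h
    · exact Or.inr ⟨hx, h⟩)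

theorem mySqBound {ε x y : ℝ} (hε : 0 < ε) : (x+y)^2 ≤ (1+ε)*x^2 + (1+1/ε)*y^2 := by
  have key : ε*((1+ε)*x^2 + (1+1/ε)*y^2 - (x+y)^2) = (ε*x - y)^2 := by
    field_simp
    ring
  have h2 : 0 ≤ ε*((1+ε)*x^2 + (1+1/ε)*y^2 - (x+y)^2) := by rw [key]; positivity
  have h3 := (mul_nonneg_iff_of_pos_left hε).1 h2
  linarith

theorem myCross {δ c A B : ℝ} (hδ : 0 < δ) (hc : 0 ≤ c) :
    c * (2*(A*B)) ≤ δ*(c*A^2) + (c*B^2)/δ := by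
  have key : δ*(δ*(c*A^2) + (c*B^2)/δ - c * (2*(A*B))) = c*((δ*A - B)^2) := by
    field_simp
    ring
  have h2 : 0 ≤ δ*(δ*(c*A^2) + (c*B^2)/δ - c * (2*(A*B))) := by
    rw [key]; exact mul_nonneg hc (sq_nonneg _)
  have h3 := (mul_nonneg_iff_of_pos_left hδ).1 h2
  linarith

theorem myRealYoung (t : ℝ) (m : ℕ) (C4 : ℝ) (ht : 0 < t) (hC : 0 < C4)
    (hm : 2*t + 2 ≤ (m:ℝ)) (hm1 : 2 ≤ m) {fx a ph uu : ℝ} (hf : 0 < fx) (ha : 0 ≤ a)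
    (hph0 : 0 ≤ ph) (hph1 : ph ≤ 1) :
    a * (ph^(m-1) * Real.exp (t*uu))^2
      ≤ (1/(2*C4)) * (fx * Real.exp ((2*t+1)*uu) * ph^(2*m))
        + (2*C4)^(2*t) * (fx ^ (-(2*t)) * a ^ (2*t+1)) := by
  set α : ℝ := 2*t/(2*t+1) with hα
  have h2t1 : (0:ℝ) < 2*t+1 := by linarith
  have hd : α*(2*t+1) = 2*t := by rw [hα]; field_simp
  have hα0 : 0 ≤ α := by positivity
  have hα1 : α ≤ 1 := by rw [hα, div_le_one h2t1]; linarith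
  have h1α : (0:ℝ) ≤ 1 - α := by linarith
  set X : ℝ := fx * Real.exp ((2*t+1)*uu) * ph^(2*m) with hX
  set Y : ℝ := fx ^ (-(2*t)) * a ^ (2*t+1) with hY
  have hXnn : 0 ≤ X := by positivity
  have hYnn : 0 ≤ Y := by positivity
  have key : a * (ph^(m-1) * Real.exp (t*uu))^2 ≤ X ^ α * Y ^ (1-α) := by
    rcases eq_or_lt_of_le ha with ha0 | ha0
    · rw [← ha0]; simpa using by positivity
    rcases eq_or_lt_of_le hph0 with hph | hph
    · have h0 : ph ^ (m-1) = 0 := by rw [← hph]; exact zero_pow (by omega)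
      rw [h0]
      simpa using by positivity
    have hXpos : 0 < X := by positivity
    have hYpos : 0 < Y := by positivity
    have hLpos : 0 < a * (ph^(m-1) * Real.exp (t*uu))^2 := by positivity
    have hlogX : Real.log X = Real.log fx + (2*t+1)*uu + (2*(m:ℝ))*Real.log ph := by
      rw [hX, Real.log_mul (by positivity) (by positivity),
        Real.log_mul (ne_of_gt hf) (Real.exp_ne_zero _), Real.log_exp, Real.log_pow]
      push_cast; ring
    have hlogY : Real.log Y = -(2*t)*Real.log fx + (2*t+1)*Real.log a := by
      rw [hY, Real.log_mul (by positivity) (by positivity),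
        Real.log_rpow hf, Real.log_rpow ha0]
    rw [← Real.log_le_log_iff hLpos (by positivity)]
    rw [Real.log_mul (ne_of_gt ha0) (by positivity), Real.log_pow,
      Real.log_mul (by positivity) (Real.exp_ne_zero _), Real.log_pow, Real.log_exp,
      Real.log_mul (by positivity) (by positivity),
      Real.log_rpow hXpos, Real.log_rpow hYpos, hlogX, hlogY]
    have hcast : ((m-1:ℕ):ℝ) = (m:ℝ) - 1 := by
      push_cast [Nat.cast_sub (by omega : 1 ≤ m)]; ring
    rw [hcast]
    push_cast
    have hlp : Real.log ph ≤ 0 := Real.log_nonpos hph0 hph1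
    have hfact : (0:ℝ) ≤ (2*(m:ℝ)-4*t-2)*(1-α)*(-Real.log ph) := by
      apply mul_nonneg (mul_nonneg (by linarith) h1α)
      linarith
    have hkey : α * (Real.log fx + (2*t+1)*uu + 2*(m:ℝ)*Real.log ph)
        + (1-α)*(-(2*t)*Real.log fx + (2*t+1)*Real.log a)
        - (Real.log a + 2*(((m:ℝ)-1)*Real.log ph + t*uu))
        = (2*(m:ℝ)-4*t-2)*(1-α)*(-Real.log ph) := by
      linear_combination (Real.log fx + uu - Real.log a + 2*Real.log ph) * hd
    linarith [hkey, hfact]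
  have hsplit : X ^ α * Y ^ (1-α) ≤ (1/(2*C4)) * X + (2*C4)^(2*t) * Y := by
    have h2C : (0:ℝ) < 2*C4 := by linarith
    have hid : X ^ α * Y ^ (1-α) = (X/(2*C4)) ^ α * ((2*C4)^(2*t) * Y) ^ (1-α) := by
      rw [Real.div_rpow hXnn h2C.le, Real.mul_rpow (by positivity) hYnn,
        ← Real.rpow_mul h2C.le]
      have h2tα : 2*t*(1-α) = α := by nlinarith [hd]
      rw [h2tα]
      field_simp
    rw [hid]
    have hg := Real.geom_mean_le_arith_mean2_weighted hα0 h1α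
      (by positivity : (0:ℝ) ≤ X/(2*C4)) (by positivity : (0:ℝ) ≤ (2*C4)^(2*t) * Y)
      (by ring : α + (1-α) = 1)
    have h1 : α * (X/(2*C4)) ≤ X/(2*C4) := mul_le_of_le_one_left (by positivity) hα1
    have h2 : (1-α) * ((2*C4)^(2*t) * Y) ≤ (2*C4)^(2*t) * Y :=
      mul_le_of_le_one_left (by positivity) (by linarith)
    have hdiv : X/(2*C4) = (1/(2*C4)) * X := by ring
    linarith [hg]
  linarith [key, hsplit]

theorem myENNYoung (t : ℝ) (m : ℕ) (C4 : ℝ) (ht : 0 < t) (hC : 0 < C4)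
    (hm : 2*t + 2 ≤ (m:ℝ)) (hm1 : 2 ≤ m) {fx a ph uu : ℝ} (hf : 0 ≤ fx) (ha : 0 ≤ a)
    (hph0 : 0 ≤ ph) (hph1 : ph ≤ 1) :
    ENNReal.ofReal (a * (ph^(m-1) * Real.exp (t*uu))^2)
      ≤ ENNReal.ofReal (1/(2*C4)) * ENNReal.ofReal (fx * Real.exp ((2*t+1)*uu) * ph^(2*m))
        + ENNReal.ofReal ((2*C4)^(2*t)) *
            ((ENNReal.ofReal fx) ^ (-(2*t)) * ENNReal.ofReal (a ^ (2*t+1))) := by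
  rcases eq_or_lt_of_le hf with hf0 | hf0
  · rcases eq_or_lt_of_le ha with ha0 | ha0
    · rw [← ha0]
      simp
    · have h1 : (ENNReal.ofReal fx) ^ (-(2*t)) = ⊤ := by
        rw [← hf0, ENNReal.ofReal_zero, ENNReal.zero_rpow_of_neg (by linarith)]
      have h2 : ENNReal.ofReal (a ^ (2*t+1)) ≠ 0 := by
        simp only [ne_eq, ENNReal.ofReal_eq_zero, not_le]
        exact Real.rpow_pos_of_pos ha0 _
      rw [h1, ENNReal.top_mul h2, ENNReal.mul_top (by
        simp only [ne_eq, ENNReal.ofReal_eq_zero, not_le]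
        positivity)]
      exact le_top
  · calc ENNReal.ofReal (a * (ph^(m-1) * Real.exp (t*uu))^2)
        ≤ ENNReal.ofReal ((1/(2*C4)) * (fx * Real.exp ((2*t+1)*uu) * ph^(2*m))
            + (2*C4)^(2*t) * (fx ^ (-(2*t)) * a ^ (2*t+1))) :=
          ENNReal.ofReal_le_ofReal (myRealYoung t m C4 ht hC hm hm1 hf0 ha hph0 hph1)
      _ ≤ _ := by
          refine le_trans (ENNReal.ofReal_add_le) (add_le_add ?_ ?_)
          · rw [ENNReal.ofReal_mul (by positivity)]
          · rw [ENNReal.ofReal_mul (by positivity),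
              ENNReal.ofReal_mul (by positivity),
              ← ENNReal.ofReal_rpow_of_pos hf0]

end Aux

/-- **Statement 14.** Moser-iteration estimate (Gelfand nonlinearity, exponent `2m`) for
stable weak solutions of `-Δ_p u = f(x) e^u`:
`∫_Ω f e^{(2t+1)u} φ^{2m} ≤ C ∫_Ω f^{-2t} (|∇u|^{p-2}|∇φ|²)^{2t+1}` for `0 < t < 2/(p-1)`,
with `C` independent of `Ω`, `f` and `u`; both sides are `[0,∞]`-valued integrals. -/
theorem moser_estimate_gelfand_2m
    (p t : ℝ) (hp : 2 ≤ p) (ht1 : 0 < t) (ht2 : t < 2 / (p - 1)) :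
    ∃ m₀ : ℕ, 1 ≤ m₀ ∧ ∀ m : ℕ, m₀ ≤ m → ∃ C : ℝ, 0 < C ∧
      ∀ (n : ℕ), 1 ≤ n →
      ∀ Ω : Set (EuclideanSpace ℝ (Fin n)), IsOpen Ω →
      ∀ f : EuclideanSpace ℝ (Fin n) → ℝ, ContinuousOn f Ω → (∀ x ∈ Ω, 0 ≤ f x) →
      ∀ u : EuclideanSpace ℝ (Fin n) → ℝ, ContDiffOn ℝ 1 u Ω →
      (∀ φ : EuclideanSpace ℝ (Fin n) → ℝ, ContDiff ℝ 1 φ → HasCompactSupport φ →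
        tsupport φ ⊆ Ω →
        (∫ x in Ω, ‖gradient u x‖ ^ (p - 2) * (inner ℝ (gradient u x) (gradient φ x) : ℝ)) =
          ∫ x in Ω, f x * Real.exp (u x) * φ x) →
      (∀ φ : EuclideanSpace ℝ (Fin n) → ℝ, ContDiff ℝ 1 φ → HasCompactSupport φ →
        tsupport φ ⊆ Ω →
        (∫ x in Ω, f x * Real.exp (u x) * φ x ^ 2) ≤
          (p - 1) * ∫ x in Ω, ‖gradient u x‖ ^ (p - 2) * ‖gradient φ x‖ ^ 2) →
      ∀ φ : EuclideanSpace ℝ (Fin n) → ℝ, ContDiff ℝ 1 φ → HasCompactSupport φ →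
        tsupport φ ⊆ Ω → (∀ x, 0 ≤ φ x) → (∀ x, φ x ≤ 1) →
        (∫⁻ x in Ω, ENNReal.ofReal
            (f x * Real.exp ((2 * t + 1) * u x) * φ x ^ (2 * (m : ℝ)))) ≤
          ENNReal.ofReal C *
            ∫⁻ x in Ω, ENNReal.ofReal (f x) ^ (-(2 * t)) *
              ENNReal.ofReal
                ((‖gradient u x‖ ^ (p - 2) * ‖gradient φ x‖ ^ 2) ^ (2 * t + 1)) := by
  have hp1 : (0:ℝ) < p - 1 := by linarith
  set r : ℝ := (p-1)*t/2 with hrdef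
  have hr0 : 0 < r := by positivity
  have hr1 : r < 1 := by
    rw [hrdef]
    have := (lt_div_iff₀ hp1).1 ht2
    linarith
  refine ⟨⌈2*t⌉₊ + 2, by omega, ?_⟩
  intro m hm
  have hm2 : 2 ≤ m := by omega
  have hmt : 2*t + 2 ≤ (m:ℝ) := by
    have h1 : ((⌈2*t⌉₊ + 2 : ℕ):ℝ) ≤ (m:ℝ) := by exact_mod_cast hm
    have h2 := Nat.le_ceil (2*t)
    push_cast at h1
    linarith
  set ε : ℝ := (1-r)/(4*r) with hεdef
  set δ : ℝ := t*(1-r) with hδdef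
  have hε : 0 < ε := by rw [hεdef]; exact div_pos (by linarith) (by linarith)
  have hδ0 : 0 < δ := by rw [hδdef]; exact mul_pos ht1 (by linarith)
  have hδ2t : δ < 2*t := by
    rw [hδdef]; nlinarith
  set A1 : ℝ := (p-1)*(1+ε)*t^2 with hA1def
  set A2 : ℝ := (p-1)*(1+1/ε)*(m:ℝ)^2 with hA2def
  set A3 : ℝ := (m:ℝ)^2/δ with hA3def
  set η : ℝ := t*(1-r)/2 with hηdef
  have hmpos : (0:ℝ) < (m:ℝ) := by positivity
  have hA1 : 0 < A1 := by rw [hA1def]; positivity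
  have hA2 : 0 < A2 := by rw [hA2def]; positivity
  have hA3 : 0 < A3 := by rw [hA3def]; positivity
  have hη : 0 < η := by rw [hηdef]; positivity
  set C4 : ℝ := (A1*A3 + (2*t-δ)*A2)/η with hC4def
  have hC4 : 0 < C4 := by
    rw [hC4def]
    apply div_pos _ hη
    have : 0 < 2*t - δ := by linarith
    positivity
  set Ce : ℝ := (2*C4)^(2*t) with hCedef
  have hCe : 0 < Ce := by rw [hCedef]; positivity
  refine ⟨2*(C4*Ce), by positivity, ?_⟩
  intro n hn Ω hΩ f hf hf0 u hu hweak hstab φ hφ hφc hφΩ hφ0 hφ1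
  set K : Set (EuclideanSpace ℝ (Fin n)) := tsupport φ with hKdef
  have hK : IsCompact K := hφc
  have hKΩ : K ⊆ Ω := hφΩ
  have hφK : ∀ x, x ∉ K → φ x = 0 := fun x hx => image_eq_zero_of_notMem_tsupport hx
  have hgφK : ∀ x, x ∉ K → gradient φ x = 0 := fun x hx =>
    Function.notMem_support.1 (fun hs => hx (myGradSupp hs))
  -- test functions
  set ψ : EuclideanSpace ℝ (Fin n) → ℝ := fun y => Real.exp (t * u y) * φ y ^ m with hψdef
  set χ : EuclideanSpace ℝ (Fin n) → ℝ :=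
    fun y => Real.exp ((2*t) * u y) * φ y ^ (2*m) with hχdef
  have hψ1 : ContDiff ℝ 1 ψ := myContDiffAux hΩ hu hφ hφΩ t (by omega)
  have hχ1 : ContDiff ℝ 1 χ := myContDiffAux hΩ hu hφ hφΩ (2*t) (by omega)
  have hψts : tsupport ψ ⊆ K := closure_minimal (mySuppAux t (by omega)) (isClosed_tsupport φ)
  have hχts : tsupport χ ⊆ K :=
    closure_minimal (mySuppAux (2*t) (by omega)) (isClosed_tsupport φ)
  have hψc : HasCompactSupport ψ := hK.of_isClosed_subset isClosed_closure hψts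
  have hχc : HasCompactSupport χ := hK.of_isClosed_subset isClosed_closure hχts
  have hψΩ : tsupport ψ ⊆ Ω := hψts.trans hKΩ
  have hχΩ : tsupport χ ⊆ Ω := hχts.trans hKΩ
  -- continuity facts
  have hgradu : ContinuousOn (fun x => gradient u x) Ω := by
    have h1 : ContinuousOn (fderiv ℝ u) Ω := hu.continuousOn_fderiv_of_isOpen hΩ le_rfl
    exact (InnerProductSpace.toDual ℝ
      (EuclideanSpace ℝ (Fin n))).symm.continuous.comp_continuousOn h1
  have hgradφ : Continuous (fun x => gradient φ x) := by
    have h1 : Continuous (fderiv ℝ φ) := hφ.continuous_fderiv one_ne_zero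
    exact (InnerProductSpace.toDual ℝ (EuclideanSpace ℝ (Fin n))).symm.continuous.comp h1
  have hnormu : ContinuousOn (fun x => ‖gradient u x‖) Ω := hgradu.norm
  have hpow2 : ContinuousOn (fun x => ‖gradient u x‖^(p-2)) Ω :=
    (Real.continuous_rpow_const (by linarith : (0:ℝ) ≤ p-2)).comp_continuousOn hnormu
  have hcu : ContinuousOn u Ω := hu.continuousOn
  have hexpc : ∀ s : ℝ, ContinuousOn (fun x => Real.exp (s * u x)) Ω := fun s =>
    Real.continuous_exp.comp_continuousOn (continuousOn_const.mul hcu)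
  have hcφ : Continuous φ := hφ.continuous
  -- key scalar functions
  set Ix : EuclideanSpace ℝ (Fin n) → ℝ :=
    fun x => f x * Real.exp ((2*t+1) * u x) * φ x ^ (2*m) with hIxdef
  set Jx : EuclideanSpace ℝ (Fin n) → ℝ :=
    fun x => ‖gradient u x‖^(p-2) *
      (‖gradient u x‖ * φ x ^ m * Real.exp (t * u x))^2 with hJxdef
  set K1x : EuclideanSpace ℝ (Fin n) → ℝ :=
    fun x => ‖gradient u x‖^(p-2) *
      (‖gradient φ x‖ * φ x ^ (m-1) * Real.exp (t * u x))^2 with hK1xdef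
  have hIxcont : ContinuousOn Ix Ω :=
    (hf.mul (hexpc _)).mul (hcφ.continuousOn.pow _)
  have hJxcont : ContinuousOn Jx Ω :=
    hpow2.mul (((hnormu.mul (hcφ.continuousOn.pow _)).mul (hexpc _)).pow _)
  have hK1xcont : ContinuousOn K1x Ω :=
    hpow2.mul ((((hgradφ.norm.continuousOn).mul (hcφ.continuousOn.pow _)).mul (hexpc _)).pow _)
  -- support facts
  have hsuppIx : Function.support Ix ⊆ K := by
    intro x hx
    by_contra hxK
    exact hx (by simp [hIxdef, hφK x hxK, zero_pow (show 2*m ≠ 0 by omega)])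
  have hsuppJx : Function.support Jx ⊆ K := by
    intro x hx
    by_contra hxK
    exact hx (by simp [hJxdef, hφK x hxK, zero_pow (show m ≠ 0 by omega)])
  have hsuppK1x : Function.support K1x ⊆ K := by
    intro x hx
    by_contra hxK
    exact hx (by simp [hK1xdef, hgφK x hxK])
  have hIxint : IntegrableOn Ix Ω := myIntegrableAux hΩ hK hKΩ hIxcont hsuppIx
  have hJxint : IntegrableOn Jx Ω := myIntegrableAux hΩ hK hKΩ hJxcont hsuppJx
  have hK1xint : IntegrableOn K1x Ω := myIntegrableAux hΩ hK hKΩ hK1xcont hsuppK1x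
  -- abbreviations for the three integrals
  set I : ℝ := ∫ x in Ω, Ix x with hIdef
  set J : ℝ := ∫ x in Ω, Jx x with hJdef
  set K1 : ℝ := ∫ x in Ω, K1x x with hK1def
  have hJxnn : ∀ x, 0 ≤ Jx x := fun x =>
    mul_nonneg (Real.rpow_nonneg (norm_nonneg _) _) (sq_nonneg _)
  have hK1xnn : ∀ x, 0 ≤ K1x x := fun x =>
    mul_nonneg (Real.rpow_nonneg (norm_nonneg _) _) (sq_nonneg _)
  have hJnn : 0 ≤ J := setIntegral_nonneg hΩ.measurableSet (fun x _ => hJxnn x)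
  have hK1nn : 0 ≤ K1 := setIntegral_nonneg hΩ.measurableSet (fun x _ => hK1xnn x)
  -- exp square helper
  have hexpsq : ∀ z : ℝ, Real.exp z ^ 2 = Real.exp (2*z) := fun z => by
    rw [sq, ← Real.exp_add]; ring_nf
  -- STEP A : stability with ψ
  have hIeq : ∀ x, f x * Real.exp (u x) * ψ x ^ 2 = Ix x := by
    intro x
    show f x * Real.exp (u x) * (Real.exp (t * u x) * φ x ^ m) ^ 2 = Ix x
    calc f x * Real.exp (u x) * (Real.exp (t * u x) * φ x ^ m) ^ 2
        = f x * (Real.exp (u x) * Real.exp (2*(t*u x))) * φ x ^ (m*2) := by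
          rw [mul_pow, hexpsq (t*u x), ← pow_mul]; ring
      _ = Ix x := by
          rw [← Real.exp_add, show u x + 2*(t*u x) = (2*t+1)*u x by ring, Nat.mul_comm]
  have hgψ : ∀ x ∈ Ω, gradient ψ x
      = (Real.exp (t*u x) * (t * φ x ^ m)) • gradient u x
        + (Real.exp (t*u x) * ((m:ℝ) * φ x ^ (m-1))) • gradient φ x := fun x hx =>
    (myGradAux hΩ hu hφ t m hx).gradient
  set Gψ : EuclideanSpace ℝ (Fin n) → ℝ := fun x =>
    ‖gradient u x‖^(p-2) *
      ‖(Real.exp (t*u x) * (t * φ x ^ m)) • gradient u x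
        + (Real.exp (t*u x) * ((m:ℝ) * φ x ^ (m-1))) • gradient φ x‖^2 with hGψdef
  have hGψcont : ContinuousOn Gψ Ω := by
    apply hpow2.mul
    apply ContinuousOn.pow
    apply ContinuousOn.norm
    exact (((hexpc t).mul (continuousOn_const.mul (hcφ.continuousOn.pow m))).smul hgradu).add
      (((hexpc t).mul (continuousOn_const.mul (hcφ.continuousOn.pow (m-1)))).smul
        hgradφ.continuousOn)
  have hsuppGψ : Function.support Gψ ⊆ K := by
    intro x hx
    by_contra hxK
    exact hx (by
      simp [hGψdef, hφK x hxK, zero_pow (show m ≠ 0 by omega),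
        zero_pow (show m-1 ≠ 0 by omega)])
  have hGψint : IntegrableOn Gψ Ω := myIntegrableAux hΩ hK hKΩ hGψcont hsuppGψ
  have hGψle : ∀ x, Gψ x ≤ (1+ε)*t^2 * Jx x + (1+1/ε)*(m:ℝ)^2 * K1x x := by
    intro x
    have hgnn : 0 ≤ ‖gradient u x‖^(p-2) := Real.rpow_nonneg (norm_nonneg _) _
    have hc1 : 0 ≤ Real.exp (t*u x) * (t * φ x ^ m) :=
      mul_nonneg (Real.exp_pos _).le (mul_nonneg ht1.le (pow_nonneg (hφ0 x) m))
    have hc2 : 0 ≤ Real.exp (t*u x) * ((m:ℝ) * φ x ^ (m-1)) :=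
      mul_nonneg (Real.exp_pos _).le (mul_nonneg (by positivity) (pow_nonneg (hφ0 x) _))
    have hn : ‖(Real.exp (t*u x) * (t * φ x ^ m)) • gradient u x
        + (Real.exp (t*u x) * ((m:ℝ) * φ x ^ (m-1))) • gradient φ x‖
        ≤ (Real.exp (t*u x) * (t * φ x ^ m)) * ‖gradient u x‖
          + (Real.exp (t*u x) * ((m:ℝ) * φ x ^ (m-1))) * ‖gradient φ x‖ := by
      refine (norm_add_le _ _).trans ?_
      rw [norm_smul, norm_smul, Real.norm_eq_abs, Real.norm_eq_abs,
        abs_of_nonneg hc1, abs_of_nonneg hc2]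
    have hsq : ‖(Real.exp (t*u x) * (t * φ x ^ m)) • gradient u x
        + (Real.exp (t*u x) * ((m:ℝ) * φ x ^ (m-1))) • gradient φ x‖^2
        ≤ ((Real.exp (t*u x) * (t * φ x ^ m)) * ‖gradient u x‖
          + (Real.exp (t*u x) * ((m:ℝ) * φ x ^ (m-1))) * ‖gradient φ x‖)^2 :=
      pow_le_pow_left₀ (norm_nonneg _) hn 2
    have hsq2 := mySqBound (x := (Real.exp (t*u x) * (t * φ x ^ m)) * ‖gradient u x‖)
      (y := (Real.exp (t*u x) * ((m:ℝ) * φ x ^ (m-1))) * ‖gradient φ x‖) hε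
    calc Gψ x ≤ ‖gradient u x‖^(p-2) *
        ((1+ε)*((Real.exp (t*u x) * (t * φ x ^ m)) * ‖gradient u x‖)^2
          + (1+1/ε)*((Real.exp (t*u x) * ((m:ℝ) * φ x ^ (m-1))) * ‖gradient φ x‖)^2) :=
          mul_le_mul_of_nonneg_left (hsq.trans hsq2) hgnn
      _ = (1+ε)*t^2 * Jx x + (1+1/ε)*(m:ℝ)^2 * K1x x := by
          simp only [hJxdef, hK1xdef]; ring
  have hstabψ := hstab ψ hψ1 hψc hψΩ
  simp only [hIeq] at hstabψ
  have hstabRHS : (∫ x in Ω, ‖gradient u x‖^(p-2) * ‖gradient ψ x‖^2) = ∫ x in Ω, Gψ x :=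
    setIntegral_congr_fun hΩ.measurableSet (fun x hx => by
      show ‖gradient u x‖^(p-2) * ‖gradient ψ x‖^2 = Gψ x
      rw [hGψdef, hgψ x hx])
  have hA' : I ≤ A1 * J + A2 * K1 := by
    have h1 : (∫ x in Ω, Gψ x)
        ≤ ∫ x in Ω, ((1+ε)*t^2 * Jx x + (1+1/ε)*(m:ℝ)^2 * K1x x) :=
      setIntegral_mono_on hGψint ((hJxint.const_mul _).add (hK1xint.const_mul _))
        hΩ.measurableSet (fun x _ => hGψle x)
    rw [integral_add (hJxint.const_mul _) (hK1xint.const_mul _), integral_const_mul,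
      integral_const_mul] at h1
    have h2 : I ≤ (p-1) * ∫ x in Ω, Gψ x := by
      rw [← hstabRHS]; exact hstabψ
    have h3 : (p-1) * (∫ x in Ω, Gψ x)
        ≤ (p-1) * ((1+ε)*t^2 * J + (1+1/ε)*(m:ℝ)^2 * K1) :=
      mul_le_mul_of_nonneg_left h1 (by linarith only [hp1])
    have h4 : (p-1) * ((1+ε)*t^2 * J + (1+1/ε)*(m:ℝ)^2 * K1) = A1 * J + A2 * K1 := by
      rw [hA1def, hA2def]; ring
    linarith only [h1, h2, h3, h4]
  -- STEP B : weak form with χ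
  have hχeq : ∀ x, f x * Real.exp (u x) * χ x = Ix x := by
    intro x
    show f x * Real.exp (u x) * (Real.exp ((2*t) * u x) * φ x ^ (2*m)) = Ix x
    calc f x * Real.exp (u x) * (Real.exp ((2*t) * u x) * φ x ^ (2*m))
        = f x * (Real.exp (u x) * Real.exp ((2*t) * u x)) * φ x ^ (2*m) := by ring
      _ = Ix x := by
          rw [← Real.exp_add, show u x + (2*t)*u x = (2*t+1)*u x by ring]
  have hgχ : ∀ x ∈ Ω, gradient χ x
      = (Real.exp ((2*t)*u x) * ((2*t) * φ x ^ (2*m))) • gradient u x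
        + (Real.exp ((2*t)*u x) * (((2*m:ℕ):ℝ) * φ x ^ (2*m-1))) • gradient φ x := fun x hx =>
    (myGradAux hΩ hu hφ (2*t) (2*m) hx).gradient
  set Mx : EuclideanSpace ℝ (Fin n) → ℝ := fun x =>
    ‖gradient u x‖^(p-2) * (Real.exp ((2*t)*u x) * (2*(m:ℝ)) * φ x ^ (m+(m-1)))
      * (inner ℝ (gradient u x) (gradient φ x) : ℝ) with hMxdef
  have hMxcont : ContinuousOn Mx Ω :=
    (hpow2.mul (((hexpc _).mul continuousOn_const).mul (hcφ.continuousOn.pow _))).mul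
      (hgradu.inner hgradφ.continuousOn)
  have hsuppMx : Function.support Mx ⊆ K := by
    intro x hx
    by_contra hxK
    exact hx (by simp only [hMxdef, hgφK x hxK, inner_zero_right, mul_zero])
  have hMxint : IntegrableOn Mx Ω := myIntegrableAux hΩ hK hKΩ hMxcont hsuppMx
  have hweakχ := hweak χ hχ1 hχc hχΩ
  simp only [hχeq] at hweakχ
  have hweakLHS : (∫ x in Ω, ‖gradient u x‖^(p-2)
        * (inner ℝ (gradient u x) (gradient χ x) : ℝ))
      = ∫ x in Ω, (2*t*Jx x + Mx x) := by
    apply setIntegral_congr_fun hΩ.measurableSet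
    intro x hx
    show ‖gradient u x‖^(p-2) * (inner ℝ (gradient u x) (gradient χ x) : ℝ)
      = 2*t*Jx x + Mx x
    rw [hgχ x hx, inner_add_right, real_inner_smul_right, real_inner_smul_right,
      real_inner_self_eq_norm_sq]
    have e1 : Real.exp ((2*t)*u x) = Real.exp (t*u x)^2 := by
      rw [hexpsq (t*u x)]; ring_nf
    have e2 : φ x ^ (2*m) = (φ x ^ m)^2 := by rw [← pow_mul, Nat.mul_comm]
    have e3 : φ x ^ (2*m-1) = φ x ^ m * φ x ^ (m-1) := by
      rw [← pow_add]; congr 1; omega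
    simp only [hJxdef, hMxdef, e1, e2, e3, pow_add]
    push_cast
    ring
  have hBsum : I = 2*t*J + ∫ x in Ω, Mx x := by
    rw [hIdef, hJdef, ← hweakχ, hweakLHS,
      integral_add ((hJxint.const_mul _)) hMxint, integral_const_mul]
  have hMle : ∀ x, -Mx x ≤ δ*Jx x + A3*K1x x := by
    intro x
    have hgnn : 0 ≤ ‖gradient u x‖^(p-2) := Real.rpow_nonneg (norm_nonneg _) _
    have hcoef : 0 ≤ Real.exp ((2*t)*u x) * (2*(m:ℝ)) * φ x ^ (m+(m-1)) := by
      apply mul_nonneg (mul_nonneg (Real.exp_pos _).le (by positivity))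
      exact pow_nonneg (hφ0 x) _
    have hinner : -(inner ℝ (gradient u x) (gradient φ x) : ℝ)
        ≤ ‖gradient u x‖ * ‖gradient φ x‖ :=
      (neg_le_abs _).trans (abs_real_inner_le_norm _ _)
    have h1 : -Mx x ≤ (‖gradient u x‖^(p-2)
        * (Real.exp ((2*t)*u x) * (2*(m:ℝ)) * φ x ^ (m+(m-1))))
        * (‖gradient u x‖ * ‖gradient φ x‖) := by
      have heq : -Mx x = (‖gradient u x‖^(p-2)
          * (Real.exp ((2*t)*u x) * (2*(m:ℝ)) * φ x ^ (m+(m-1))))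
          * (-(inner ℝ (gradient u x) (gradient φ x) : ℝ)) := by
        simp only [hMxdef]; ring
      rw [heq]
      exact mul_le_mul_of_nonneg_left hinner (mul_nonneg hgnn hcoef)
    have h2 := myCross (δ := δ) (c := ‖gradient u x‖^(p-2))
      (A := ‖gradient u x‖ * φ x ^ m * Real.exp (t*u x))
      (B := (m:ℝ) * (‖gradient φ x‖ * φ x ^ (m-1) * Real.exp (t*u x))) hδ0 hgnn
    have e1 : Real.exp ((2*t)*u x) = Real.exp (t*u x)^2 := by
      rw [hexpsq (t*u x)]; ring_nf
    have heq2 : (‖gradient u x‖^(p-2)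
        * (Real.exp ((2*t)*u x) * (2*(m:ℝ)) * φ x ^ (m+(m-1))))
        * (‖gradient u x‖ * ‖gradient φ x‖)
        = ‖gradient u x‖^(p-2) * (2*((‖gradient u x‖ * φ x ^ m * Real.exp (t*u x))
          * ((m:ℝ) * (‖gradient φ x‖ * φ x ^ (m-1) * Real.exp (t*u x))))) := by
      rw [e1, pow_add]; ring
    have heq3 : δ*(‖gradient u x‖^(p-2) * (‖gradient u x‖ * φ x ^ m * Real.exp (t*u x))^2)
        + (‖gradient u x‖^(p-2)
            * ((m:ℝ) * (‖gradient φ x‖ * φ x ^ (m-1) * Real.exp (t*u x)))^2)/δ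
        = δ*Jx x + A3*K1x x := by
      simp only [hJxdef, hK1xdef, hA3def]
      field_simp
    calc -Mx x ≤ _ := h1
      _ = _ := heq2
      _ ≤ _ := h2
      _ = δ*Jx x + A3*K1x x := heq3
  have hB : 2*t*J ≤ I + δ*J + A3*K1 := by
    have h1 : (∫ x in Ω, -Mx x) ≤ ∫ x in Ω, (δ*Jx x + A3*K1x x) :=
      setIntegral_mono_on hMxint.neg ((hJxint.const_mul _).add (hK1xint.const_mul _))
        hΩ.measurableSet (fun x _ => hMle x)
    rw [integral_neg, integral_add ((hJxint.const_mul _)) ((hK1xint.const_mul _)),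
      integral_const_mul, integral_const_mul] at h1
    have h2 : -(∫ x in Ω, Mx x) ≤ δ*J + A3*K1 := h1
    linarith only [hBsum, h2]
  -- combine to I ≤ C4 * K1
  have hetaeq : 2*t - δ - A1 = η := by
    rw [hA1def, hδdef, hηdef, hεdef, hrdef]
    have h1 : (p-1)*t ≠ 0 := by positivity
    field_simp
    ring
  have hstep1 : (2*t-δ)*J ≤ I + A3*K1 := by linarith only [hB]
  have hmul1 : A1*((2*t-δ)*J) ≤ A1*(I + A3*K1) := mul_le_mul_of_nonneg_left hstep1 hA1.le
  have hmul2 : (2*t-δ)*I ≤ (2*t-δ)*(A1*J + A2*K1) :=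
    mul_le_mul_of_nonneg_left hA' (by linarith only [hδ2t])
  have hetaI : η*I = (2*t-δ)*I - A1*I := by rw [← hetaeq]; ring
  have hnum : η*I ≤ (A1*A3 + (2*t-δ)*A2)*K1 := by linarith only [hmul1, hmul2, hetaI]
  have hIK : I ≤ C4 * K1 := by
    have hC4K : η*(C4*K1) = (A1*A3 + (2*t-δ)*A2)*K1 := by
      rw [hC4def]; field_simp
    have : η*I ≤ η*(C4*K1) := by rw [hC4K]; exact hnum
    exact le_of_mul_le_mul_left this hη
  -- STEP C : pass to lintegrals
  have hgoal1 : ∀ x : EuclideanSpace ℝ (Fin n),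
      ENNReal.ofReal (f x * Real.exp ((2 * t + 1) * u x) * φ x ^ (2 * (m:ℝ)))
        = ENNReal.ofReal (Ix x) := by
    intro x
    congr 1
    simp only [hIxdef]
    rw [show (2*((m:ℕ):ℝ)) = ((2*m:ℕ):ℝ) by push_cast; ring, Real.rpow_natCast]
  rw [lintegral_congr hgoal1]
  have hIxnn : 0 ≤ᵐ[volume.restrict Ω] Ix := by
    filter_upwards [ae_restrict_mem hΩ.measurableSet] with x hx
    exact mul_nonneg (mul_nonneg (hf0 x hx) (Real.exp_pos _).le) (pow_nonneg (hφ0 x) _)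
  have hK1xnnae : 0 ≤ᵐ[volume.restrict Ω] K1x := ae_of_all _ hK1xnn
  have hAeq : ENNReal.ofReal I = ∫⁻ x in Ω, ENNReal.ofReal (Ix x) :=
    ofReal_integral_eq_lintegral_ofReal hIxint hIxnn
  have hK1eq : ENNReal.ofReal K1 = ∫⁻ x in Ω, ENNReal.ofReal (K1x x) :=
    ofReal_integral_eq_lintegral_ofReal hK1xint hK1xnnae
  have hfin : (∫⁻ x in Ω, ENNReal.ofReal (Ix x)) ≠ ⊤ := by
    rw [← hAeq]; exact ENNReal.ofReal_ne_top
  have hptw : ∀ᵐ x ∂(volume.restrict Ω), ENNReal.ofReal (K1x x)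
      ≤ (fun x => ENNReal.ofReal (1/(2*C4)) * ENNReal.ofReal (Ix x)) x
        + (fun x => ENNReal.ofReal Ce * ((ENNReal.ofReal (f x))^(-(2*t))
            * ENNReal.ofReal ((‖gradient u x‖^(p-2) * ‖gradient φ x‖^2)^(2*t+1)))) x := by
    filter_upwards [ae_restrict_mem hΩ.measurableSet] with x hx
    have h0 : K1x x = (‖gradient u x‖^(p-2) * ‖gradient φ x‖^2)
        * (φ x ^ (m-1) * Real.exp (t*u x))^2 := by
      simp only [hK1xdef]; ring
    rw [h0, hCedef]
    exact myENNYoung t m C4 ht1 hC4 hmt hm2 (hf0 x hx)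
      (mul_nonneg (Real.rpow_nonneg (norm_nonneg _) _) (sq_nonneg _)) (hφ0 x) (hφ1 x)
  have hmeas1 : AEMeasurable (fun x => ENNReal.ofReal (1/(2*C4)) * ENNReal.ofReal (Ix x))
      (volume.restrict Ω) :=
    (ENNReal.measurable_ofReal.comp_aemeasurable
      (hIxcont.aemeasurable hΩ.measurableSet)).const_mul _
  set B : ENNReal := ∫⁻ x in Ω, ENNReal.ofReal (f x) ^ (-(2 * t)) *
      ENNReal.ofReal ((‖gradient u x‖ ^ (p - 2) * ‖gradient φ x‖ ^ 2) ^ (2 * t + 1)) with hBdef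
  have hchain : ENNReal.ofReal K1 ≤ ENNReal.ofReal (1/(2*C4)) *
      (∫⁻ x in Ω, ENNReal.ofReal (Ix x)) + ENNReal.ofReal Ce * B := by
    calc ENNReal.ofReal K1 = ∫⁻ x in Ω, ENNReal.ofReal (K1x x) := hK1eq
      _ ≤ ∫⁻ x in Ω, ((fun x => ENNReal.ofReal (1/(2*C4)) * ENNReal.ofReal (Ix x)) x
            + (fun x => ENNReal.ofReal Ce * ((ENNReal.ofReal (f x))^(-(2*t))
              * ENNReal.ofReal ((‖gradient u x‖^(p-2)
                  * ‖gradient φ x‖^2)^(2*t+1)))) x) := lintegral_mono_ae hptw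
      _ = (∫⁻ x in Ω, ENNReal.ofReal (1/(2*C4)) * ENNReal.ofReal (Ix x))
            + ∫⁻ x in Ω, ENNReal.ofReal Ce * ((ENNReal.ofReal (f x))^(-(2*t))
              * ENNReal.ofReal ((‖gradient u x‖^(p-2)
                  * ‖gradient φ x‖^2)^(2*t+1))) := lintegral_add_left' hmeas1 _
      _ = ENNReal.ofReal (1/(2*C4)) * (∫⁻ x in Ω, ENNReal.ofReal (Ix x))
            + ENNReal.ofReal Ce * B := by
          rw [lintegral_const_mul' _ _ ENNReal.ofReal_ne_top,
            lintegral_const_mul' _ _ ENNReal.ofReal_ne_top]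
  have hfinal : (∫⁻ x in Ω, ENNReal.ofReal (Ix x))
      ≤ ENNReal.ofReal (1/2) * (∫⁻ x in Ω, ENNReal.ofReal (Ix x))
        + ENNReal.ofReal (C4*Ce) * B := by
    calc (∫⁻ x in Ω, ENNReal.ofReal (Ix x)) = ENNReal.ofReal I := hAeq.symm
      _ ≤ ENNReal.ofReal (C4*K1) := ENNReal.ofReal_le_ofReal hIK
      _ = ENNReal.ofReal C4 * ENNReal.ofReal K1 := ENNReal.ofReal_mul hC4.le
      _ ≤ ENNReal.ofReal C4 * (ENNReal.ofReal (1/(2*C4)) *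
            (∫⁻ x in Ω, ENNReal.ofReal (Ix x)) + ENNReal.ofReal Ce * B) :=
          mul_le_mul_right hchain _
      _ = ENNReal.ofReal (1/2) * (∫⁻ x in Ω, ENNReal.ofReal (Ix x))
            + ENNReal.ofReal (C4*Ce) * B := by
          rw [mul_add, ← mul_assoc, ← mul_assoc, ← ENNReal.ofReal_mul hC4.le,
            ← ENNReal.ofReal_mul hC4.le,
            show C4*(1/(2*C4)) = 1/2 by field_simp [mul_comm]]
  have h2eq : (∫⁻ x in Ω, ENNReal.ofReal (Ix x))
      = ENNReal.ofReal (1/2) * (∫⁻ x in Ω, ENNReal.ofReal (Ix x))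
        + ENNReal.ofReal (1/2) * (∫⁻ x in Ω, ENNReal.ofReal (Ix x)) := by
    rw [← add_mul, ← ENNReal.ofReal_add (by norm_num) (by norm_num)]
    norm_num
  have hhalf : ENNReal.ofReal (1/2) * (∫⁻ x in Ω, ENNReal.ofReal (Ix x))
      ≤ ENNReal.ofReal (C4*Ce) * B := by
    have hx2 : ENNReal.ofReal (1/2) * (∫⁻ x in Ω, ENNReal.ofReal (Ix x))
        + ENNReal.ofReal (1/2) * (∫⁻ x in Ω, ENNReal.ofReal (Ix x))
        ≤ ENNReal.ofReal (1/2) * (∫⁻ x in Ω, ENNReal.ofReal (Ix x))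
          + ENNReal.ofReal (C4*Ce) * B := le_trans (le_of_eq h2eq.symm) hfinal
    exact (ENNReal.add_le_add_iff_left
      (ENNReal.mul_ne_top ENNReal.ofReal_ne_top hfin)).1 hx2
  calc (∫⁻ x in Ω, ENNReal.ofReal (Ix x))
      = ENNReal.ofReal 2 * (ENNReal.ofReal (1/2) * (∫⁻ x in Ω, ENNReal.ofReal (Ix x))) := by
        rw [← mul_assoc, ← ENNReal.ofReal_mul (by norm_num)]
        norm_num
    _ ≤ ENNReal.ofReal 2 * (ENNReal.ofReal (C4*Ce) * B) := mul_le_mul_right hhalf _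
    _ = ENNReal.ofReal (2*(C4*Ce)) * B := by
        rw [← mul_assoc, ← ENNReal.ofReal_mul (by norm_num)]
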